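/- Let 0 < q < 1 and γ ≥ 0. Then the function ρ(φ) = (1/2π)[ 1 + 2γ ( q cos(φ) − q² ) / ( 1 − 2q cos(φ) + q² ) ] satisfies ρ(φ) ≥ 0 for all φ ∈ [−π, π] if and only if γ ≤ (1+q)/(2q). Moreover the minimum of ρ over [−π,π] is attained at φ = ±π. -/

import Mathlib

private lemma rho_key (q γ c : ℝ) (hq0 : 0 < q) (hq1 : q < 1) (hγ : 0 ≤ γ)
    (hc : -1 ≤ c) (hc1 : c ≤ 1) :
    2 * γ * ((q * (-1) - q ^ 2) / (1 - 2 * q * (-1) + q ^ 2)) ≤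
      2 * γ * ((q * c - q ^ 2) / (1 - 2 * q * c + q ^ 2)) := by
  have hD1 : (0:ℝ) < 1 - 2 * q * (-1) + q ^ 2 := by nlinarith
  have hD : (0:ℝ) < 1 - 2 * q * c + q ^ 2 := by nlinarith
  have hdiv : (q * (-1) - q ^ 2) / (1 - 2 * q * (-1) + q ^ 2) ≤
      (q * c - q ^ 2) / (1 - 2 * q * c + q ^ 2) := by
    rw [div_le_div_iff₀ hD1 hD]
    nlinarith [mul_nonneg (mul_nonneg hq0.le (sub_nonneg.2 hq1.le)) (by linarith : (0:ℝ) ≤ 1 + c)]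
  nlinarith

/-- Non-negativity of the weak-coupling eigenvalue density for exponentially decaying
interaction: `ρ(φ) = (1/2π)[1 + 2γ (q cos φ - q²)/(1 - 2q cos φ + q²)]` is non-negative on
`[-π,π]` iff `γ ≤ (1+q)/(2q)`, and its minimum over `[-π,π]` is attained at `φ = ±π`. -/
theorem rho_nonneg_iff_and_min (q γ : ℝ) (hq0 : 0 < q) (hq1 : q < 1) (hγ : 0 ≤ γ) :
    ((∀ φ ∈ Set.Icc (-Real.pi) Real.pi,
        0 ≤ (1 / (2 * Real.pi)) *
          (1 + 2 * γ * ((q * Real.cos φ - q ^ 2) / (1 - 2 * q * Real.cos φ + q ^ 2)))) ↔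
      γ ≤ (1 + q) / (2 * q)) ∧
    (∀ φ ∈ Set.Icc (-Real.pi) Real.pi,
        (1 / (2 * Real.pi)) *
            (1 + 2 * γ * ((q * Real.cos Real.pi - q ^ 2) /
              (1 - 2 * q * Real.cos Real.pi + q ^ 2))) ≤
          (1 / (2 * Real.pi)) *
            (1 + 2 * γ * ((q * Real.cos φ - q ^ 2) / (1 - 2 * q * Real.cos φ + q ^ 2))) ∧
        (1 / (2 * Real.pi)) *
            (1 + 2 * γ * ((q * Real.cos (-Real.pi) - q ^ 2) /
              (1 - 2 * q * Real.cos (-Real.pi) + q ^ 2))) ≤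
          (1 / (2 * Real.pi)) *
            (1 + 2 * γ * ((q * Real.cos φ - q ^ 2) / (1 - 2 * q * Real.cos φ + q ^ 2)))) := by
  have hπ : (0:ℝ) < 1 / (2 * Real.pi) := by positivity
  have hkey : ∀ φ : ℝ,
      2 * γ * ((q * (-1) - q ^ 2) / (1 - 2 * q * (-1) + q ^ 2)) ≤
        2 * γ * ((q * Real.cos φ - q ^ 2) / (1 - 2 * q * Real.cos φ + q ^ 2)) := fun φ =>
    rho_key q γ (Real.cos φ) hq0 hq1 hγ (Real.neg_one_le_cos φ) (Real.cos_le_one φ)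
  have hmin : ∀ φ : ℝ,
      (1 / (2 * Real.pi)) * (1 + 2 * γ * ((q * (-1) - q ^ 2) / (1 - 2 * q * (-1) + q ^ 2))) ≤
        (1 / (2 * Real.pi)) *
          (1 + 2 * γ * ((q * Real.cos φ - q ^ 2) / (1 - 2 * q * Real.cos φ + q ^ 2))) := by
    intro φ
    exact mul_le_mul_of_nonneg_left (by linarith [hkey φ]) hπ.le
  -- value at ±π
  have hq1' : (0:ℝ) < 1 + q := by linarith
  have hval : (q * (-1) - q ^ 2) / (1 - 2 * q * (-1) + q ^ 2) = -(q / (1 + q)) := by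
    rw [div_eq_iff (by nlinarith : (1:ℝ) - 2 * q * (-1) + q ^ 2 ≠ 0)]
    field_simp
    ring
  constructor
  · constructor
    · intro h
      have hp := h Real.pi ⟨by linarith [Real.pi_pos], le_refl _⟩
      rw [Real.cos_pi] at hp
      have h2 : 0 ≤ 1 + 2 * γ * ((q * (-1) - q ^ 2) / (1 - 2 * q * (-1) + q ^ 2)) :=
        nonneg_of_mul_nonneg_right hp hπ
      rw [hval] at h2
      have ht : q / (1 + q) * (1 + q) = q := div_mul_cancel₀ q (by linarith)
      rw [le_div_iff₀ (by linarith : (0:ℝ) < 2 * q)]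
      nlinarith [mul_le_mul_of_nonneg_right h2 hq1'.le]
    · intro h φ _
      have h0 : 0 ≤ (1 / (2 * Real.pi)) *
          (1 + 2 * γ * ((q * (-1) - q ^ 2) / (1 - 2 * q * (-1) + q ^ 2))) := by
        rw [hval]
        have hgq : γ * (2 * q) ≤ 1 + q := (le_div_iff₀ (by linarith : (0:ℝ) < 2 * q)).1 h
        have ht : q / (1 + q) * (1 + q) = q := div_mul_cancel₀ q (by linarith)
        have h3 : 2 * γ * (q / (1 + q)) ≤ 1 := by
          rw [← mul_le_mul_iff_of_pos_right hq1']
          nlinarith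
        nlinarith
      exact le_trans h0 (hmin φ)
  · intro φ _
    rw [Real.cos_pi, Real.cos_neg, Real.cos_pi]
    exact ⟨hmin φ, hmin φ⟩
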